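/- Let T_A = Aℤⁿ/qℤⁿ be a discrete torus with induced edge weights w, let x ∈ Aℤⁿ and y = x + αₙ. Suppose that for all u, v ∈ B₁(x) ∪ B₁(y) ⊂ Aℤⁿ one has d(u,v) = d([u],[v]), where d denotes combinatorial graph distance in the grid Aℤⁿ and in T_A respectively. Then κ([x],[y]) = 2w(x,y) − w(x, x−αₙ) − w(y, y+αₙ) − Σ_{i=1}^{n−1} ( |w(x, x+α_i) − w(y, y+α_i)| + |w(x, x−α_i) − w(y, y−α_i)| ). -/

import Mathlib

open Filter Topology

noncomputable section

namespace PMT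

/-- The `i`-th standard unit vector in `ℤⁿ`. -/
def e (n : ℕ) (i : Fin n) : Fin n → ℤ := fun j => if j = i then 1 else 0

/-- The grid graph on `ℤⁿ`: `x ∼ y` iff `‖x − y‖₁ = 1`. -/
def grid (n : ℕ) : SimpleGraph (Fin n → ℤ) where
  Adj x y := (∑ i, |x i - y i|) = 1
  symm := by
    constructor
    intro x y h
    have h' : ∀ i ∈ Finset.univ, |y i - x i| = |x i - y i| :=
      fun i _ => abs_sub_comm _ _
    rw [Finset.sum_congr rfl h']
    exact h
  loopless := by constructor; intro x h; simp at h

/-- The graph Laplacian `Δf(x) = Σ_{y∼x} w(x,y)(f(y)−f(x))` of an integer-valued function. -/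
def lap {V : Type*} (G : SimpleGraph V) (w : V → V → ℝ) (f : V → ℤ) (x : V) : ℝ :=
  ∑ᶠ y ∈ {y | G.Adj x y}, w x y * ((f y : ℝ) - (f x : ℝ))

/-- `f : V → ℤ` is 1-Lipschitz with respect to the combinatorial graph distance. -/
def Lip1 {V : Type*} (G : SimpleGraph V) (f : V → ℤ) : Prop :=
  ∀ x y, |f x - f y| ≤ (G.dist x y : ℤ)

/-- Ollivier curvature of the pair `(x, y)`:
`κ(x,y) = inf {Δf(x) − Δf(y) | f : V → ℤ, f 1-Lipschitz, f(y) = f(x) + 1}`. -/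
def kappa {V : Type*} (G : SimpleGraph V) (w : V → V → ℝ) (x y : V) : ℝ :=
  sInf {r | ∃ f : V → ℤ, Lip1 G f ∧ f y = f x + 1 ∧ r = lap G w f x - lap G w f y}

/-- Scalar curvature `R(x) = Σ_{y∼x} κ(x,y)`. -/
def scal {V : Type*} (G : SimpleGraph V) (w : V → V → ℝ) (x : V) : ℝ :=
  ∑ᶠ y ∈ {y | G.Adj x y}, kappa G w x y

/-- A weighted grid graph `(ℤⁿ, w)`: symmetric weights, positive on edges. -/
structure GridWeight (n : ℕ) where
  w : (Fin n → ℤ) → (Fin n → ℤ) → ℝ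
  symm : ∀ x y, w x y = w y x
  pos : ∀ x y, (grid n).Adj x y → 0 < w x y

/-- The quantity `Abs(x)` measuring the distortion from the standard grid graph. -/
def Absf (n : ℕ) (w : (Fin n → ℤ) → (Fin n → ℤ) → ℝ) (x : Fin n → ℤ) : ℝ :=
  ∑ i, ∑ j, if i ≠ j then
      (|w x (x + e n i) - w (x + e n j) (x + e n j + e n i)| +
       |w x (x + e n i) - w (x - e n j) (x - e n j + e n i)| +
       |w x (x - e n i) - w (x + e n j) (x + e n j - e n i)| +
       |w x (x - e n i) - w (x - e n j) (x - e n j - e n i)|)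
    else 0

/-- The `ℓ^∞` norm `‖x‖_∞` of `x ∈ ℤⁿ`, as a natural number. -/
def nInf {n : ℕ} (x : Fin n → ℤ) : ℕ := Finset.univ.sup fun i => (x i).natAbs

/-- The cube `Q_r = {y ∈ ℤⁿ : ‖y‖∞ ≤ r}` as a finset. -/
def Qr (n r : ℕ) : Finset (Fin n → ℤ) := Finset.Icc (fun _ => -(r : ℤ)) (fun _ => (r : ℤ))

/-- `Σ_{e ∈ E_r} w(e)`: the sum of weights of edges with exactly one endpoint in `Q_r`
(each such edge is counted once, via its endpoint inside `Q_r`). -/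
def ErSum (n : ℕ) (w : (Fin n → ℤ) → (Fin n → ℤ) → ℝ) (r : ℕ) : ℝ :=
  ∑ x ∈ Qr n r, ∑ i,
    ((if x + e n i ∉ Qr n r then w x (x + e n i) else 0) +
     (if x - e n i ∉ Qr n r then w x (x - e n i) else 0))

/-- `Σ_{τ ∈ Ẽ_r} w(τ)`: the sum of weights of edges joining the sphere `S_{r+1}` to the
sphere `S_{r+2}` (each such edge is counted once, via its endpoint in `S_{r+1}`). -/
def TErSum (n : ℕ) (w : (Fin n → ℤ) → (Fin n → ℤ) → ℝ) (r : ℕ) : ℝ :=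
  ∑ x ∈ Qr n (r + 1), if nInf x = r + 1 then
      (∑ i, ((if nInf (x + e n i) = r + 2 then w x (x + e n i) else 0) +
             (if nInf (x - e n i) = r + 2 then w x (x - e n i) else 0)))
    else 0

/-- The weighted grid graph `(ℤⁿ, w)` is asymptotically flat: there is `p > n` with
`w = 1 + o(1)`, `Abs(x) = O(‖x‖∞^{−p})` and `|R(x)| = O(‖x‖∞^{−p})` as `‖x‖∞ → ∞`. -/
def AsympFlatGrid (n : ℕ) (W : GridWeight n) : Prop :=
  ∃ p : ℝ, (n : ℝ) < p ∧
    (∀ ε : ℝ, 0 < ε → ∃ M : ℕ, ∀ x y, (grid n).Adj x y → M ≤ nInf x → |W.w x y - 1| ≤ ε) ∧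
    (∃ C : ℝ, ∃ M : ℕ, 0 < M ∧ ∀ x, M ≤ nInf x → Absf n W.w x ≤ C * (nInf x : ℝ) ^ (-p)) ∧
    (∃ C : ℝ, ∃ M : ℕ, 0 < M ∧ ∀ x, M ≤ nInf x → |scal (grid n) W.w x| ≤ C * (nInf x : ℝ) ^ (-p))


/-- The data of a discrete torus `T_A = Aℤⁿ/qℤⁿ`: an integer matrix `A` with
`det A ≠ 0`, and `q = k·|det A|` for some `k ∈ ℤ₊`. We parametrize the lattice `Aℤⁿ` by
`ℤⁿ` via `z ↦ Az` (so the vertex `x = Az` corresponds to `z`, and `α_i = A e_i`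
corresponds to `e_i`). -/
structure TorusData (n : ℕ) where
  A : Matrix (Fin n) (Fin n) ℤ
  hdet : A.det ≠ 0
  k : ℕ
  hk : 0 < k

/-- `q = k·|det A|`. -/
def TorusData.q {n : ℕ} (T : TorusData n) : ℕ := T.k * T.A.det.natAbs

/-- The subgroup `{z ∈ ℤⁿ | Az ∈ qℤⁿ}` of `ℤⁿ`; under `z ↦ Az` it corresponds to the
sublattice `qℤⁿ ⊆ Aℤⁿ`. -/
def TorusData.lat {n : ℕ} (T : TorusData n) : AddSubgroup (Fin n → ℤ) where
  carrier := {z | ∀ j, ((T.q : ℤ)) ∣ T.A.mulVec z j}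
  zero_mem' := by intro j; simp [Matrix.mulVec_zero]
  add_mem' := by
    intro a b ha hb j
    rw [Matrix.mulVec_add]
    exact dvd_add (ha j) (hb j)
  neg_mem' := by
    intro a ha j
    rw [Matrix.mulVec_neg]
    exact dvd_neg.mpr (ha j)

/-- The vertex set of the discrete torus `T_A = Aℤⁿ/qℤⁿ` (in the `z`-parametrization). -/
def TorusV {n : ℕ} (T : TorusData n) : Type := (Fin n → ℤ) ⧸ T.lat

instance {n : ℕ} (T : TorusData n) : AddCommGroup (TorusV T) :=
  QuotientAddGroup.Quotient.addCommGroup T.lat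

/-- The quotient map `Aℤⁿ → T_A` (in the `z`-parametrization, `z` stands for `x = Az`). -/
def tmk {n : ℕ} (T : TorusData n) (z : Fin n → ℤ) : TorusV T := QuotientAddGroup.mk z

/-- The graph structure of the discrete torus: `[x] ∼ [y]` iff `x − y ∈ qℤⁿ ± α_i`
for some `i` (and `[x] ≠ [y]`, so that the graph is simple). -/
def torusG {n : ℕ} (T : TorusData n) : SimpleGraph (TorusV T) where
  Adj a b := a ≠ b ∧ ∃ i : Fin n, b - a = tmk T (e n i) ∨ a - b = tmk T (e n i)
  symm := by
    constructor
    rintro a b ⟨hne, i, h | h⟩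
    · exact ⟨hne.symm, i, Or.inr h⟩
    · exact ⟨hne.symm, i, Or.inl h⟩
  loopless := by constructor; rintro a ⟨hne, -⟩; exact hne rfl

/-- The distance condition: every combinatorial ball of radius 2 in the lattice `Aℤⁿ`
embeds isometrically into the torus, i.e. `d(u,v) = d([u],[v])` for all `u, v ∈ B₂(x)`. -/
def DistCond {n : ℕ} (T : TorusData n) : Prop :=
  ∀ x u v : Fin n → ℤ, (grid n).dist x u ≤ 2 → (grid n).dist x v ≤ 2 →
    (grid n).dist u v = (torusG T).dist (tmk T u) (tmk T v)

section GridLemmas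

variable {m : ℕ}

/-- ℓ¹ distance as a natural number. -/
def nd {m : ℕ} (u v : Fin m → ℤ) : ℕ := ∑ j, (u j - v j).natAbs

lemma nd_comm (u v : Fin m → ℤ) : nd u v = nd v u := by
  unfold nd
  refine Finset.sum_congr rfl fun j _ => ?_
  omega

lemma nd_triangle (u w v : Fin m → ℤ) : nd u v ≤ nd u w + nd w v := by
  unfold nd
  rw [← Finset.sum_add_distrib]
  refine Finset.sum_le_sum fun j _ => ?_
  omega

lemma nd_eq_zero {u v : Fin m → ℤ} (h : nd u v = 0) : u = v := by
  funext j
  have := Finset.sum_eq_zero_iff.mp h j (Finset.mem_univ j)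
  omega

lemma grid_adj_iff_nd {u v : Fin m → ℤ} : (grid m).Adj u v ↔ nd u v = 1 := by
  have : (∑ i, |u i - v i|) = ((nd u v : ℤ)) := by
    unfold nd
    push_cast
    refine Finset.sum_congr rfl fun j _ => ?_
    omega
  constructor
  · intro h
    have h1 : (∑ i, |u i - v i|) = 1 := h
    rw [this] at h1
    exact_mod_cast h1
  · intro h
    show (∑ i, |u i - v i|) = 1
    rw [this, h]; norm_num

lemma nd_add_e (u : Fin m → ℤ) (i : Fin m) : nd u (u + e m i) = 1 := by
  unfold nd
  have : ∀ j, (u j - (u + e m i) j).natAbs = if j = i then 1 else 0 := by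
    intro j
    simp only [Pi.add_apply, e]
    by_cases h : j = i <;> simp [h]
  simp only [this]
  simp

lemma nd_sub_e (u : Fin m → ℤ) (i : Fin m) : nd u (u - e m i) = 1 := by
  unfold nd
  have : ∀ j, (u j - (u - e m i) j).natAbs = if j = i then 1 else 0 := by
    intro j
    simp only [Pi.sub_apply, e]
    by_cases h : j = i <;> simp [h]
  simp only [this]
  simp

lemma grid_adj_add_e (u : Fin m → ℤ) (i : Fin m) : (grid m).Adj u (u + e m i) :=
  grid_adj_iff_nd.mpr (nd_add_e u i)

lemma grid_adj_sub_e (u : Fin m → ℤ) (i : Fin m) : (grid m).Adj u (u - e m i) :=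
  grid_adj_iff_nd.mpr (nd_sub_e u i)

lemma adj_char {u v : Fin m → ℤ} (h : (grid m).Adj u v) :
    ∃ i, v = u + e m i ∨ v = u - e m i := by
  have h1 : nd u v = 1 := grid_adj_iff_nd.mp h
  unfold nd at h1
  have hex : ∃ i, u i ≠ v i := by
    by_contra hc
    push_neg at hc
    have hz : (∑ j, (u j - v j).natAbs) = 0 :=
      Finset.sum_eq_zero fun j _ => by rw [hc j]; simp
    omega
  obtain ⟨i, hi⟩ := hex
  have hsplit : (u i - v i).natAbs + ∑ j ∈ Finset.univ.erase i, (u j - v j).natAbs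
      = ∑ j, (u j - v j).natAbs :=
    Finset.add_sum_erase Finset.univ (fun j => (u j - v j).natAbs) (Finset.mem_univ i)
  have hone : (u i - v i).natAbs = 1 := by omega
  have hrest0 : ∑ j ∈ Finset.univ.erase i, (u j - v j).natAbs = 0 := by omega
  have hrest : ∀ j, j ≠ i → (u j - v j).natAbs = 0 := fun j hj =>
    Finset.sum_eq_zero_iff.mp hrest0 j (Finset.mem_erase.mpr ⟨hj, Finset.mem_univ j⟩)
  refine ⟨i, ?_⟩
  rcases Int.natAbs_eq_iff.mp hone with hcase | hcase
  · right
    funext j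
    by_cases hj : j = i
    · subst hj; simp [e]; omega
    · have := hrest j hj; simp [Pi.sub_apply, e, hj]; omega
  · left
    funext j
    by_cases hj : j = i
    · subst hj; simp [e]; omega
    · have := hrest j hj; simp [Pi.add_apply, e, hj]; omega

lemma grid_walk_exists : ∀ (k : ℕ) (u v : Fin m → ℤ), nd u v = k →
    ∃ p : (grid m).Walk u v, p.length = k := by
  intro k
  induction k with
  | zero =>
    intro u v h
    obtain rfl := nd_eq_zero h
    exact ⟨SimpleGraph.Walk.nil, rfl⟩
  | succ k ih =>
    intro u v h
    have hex : ∃ i, u i ≠ v i := by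
      by_contra hc
      push_neg at hc
      have : nd u v = 0 := Finset.sum_eq_zero fun j _ => by rw [hc j]; simp
      omega
    obtain ⟨i, hi⟩ := hex
    have hsum : ∀ w : Fin m → ℤ, nd w v
        = (w i - v i).natAbs + ∑ j ∈ Finset.univ.erase i, (w j - v j).natAbs := by
      intro w
      have : (w i - v i).natAbs + ∑ j ∈ Finset.univ.erase i, (w j - v j).natAbs
          = ∑ j, (w j - v j).natAbs :=
        Finset.add_sum_erase Finset.univ (fun j => (w j - v j).natAbs) (Finset.mem_univ i)
      unfold nd
      omega
    have key : ∃ u', (grid m).Adj u u' ∧ nd u' v + 1 = nd u v := by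
      by_cases hlt : u i < v i
      · refine ⟨u + e m i, grid_adj_add_e u i, ?_⟩
        rw [hsum, hsum u]
        have hrest : ∀ j ∈ Finset.univ.erase i, ((u + e m i) j - v j).natAbs = (u j - v j).natAbs := by
          intro j hj
          have hj' : j ≠ i := (Finset.mem_erase.mp hj).1
          simp [e, hj']
        rw [Finset.sum_congr rfl hrest]
        have hui : (u + e m i) i = u i + 1 := by simp [e]
        rw [hui]
        omega
      · refine ⟨u - e m i, grid_adj_sub_e u i, ?_⟩
        rw [hsum, hsum u]
        have hrest : ∀ j ∈ Finset.univ.erase i, ((u - e m i) j - v j).natAbs = (u j - v j).natAbs := by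
          intro j hj
          have hj' : j ≠ i := (Finset.mem_erase.mp hj).1
          simp [e, hj']
        rw [Finset.sum_congr rfl hrest]
        have hui : (u - e m i) i = u i - 1 := by simp [e]
        rw [hui]
        have : v i < u i := by omega
        omega
    obtain ⟨u', hadj, hnd⟩ := key
    obtain ⟨p, hp⟩ := ih u' v (by omega)
    exact ⟨SimpleGraph.Walk.cons hadj p, by simp [hp]⟩

lemma nd_le_walk_length {u v : Fin m → ℤ} (p : (grid m).Walk u v) : nd u v ≤ p.length := by
  induction p with
  | nil => simp [nd]
  | @cons a b c h q ih =>
    have h1 : nd a b = 1 := grid_adj_iff_nd.mp h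
    have h2 : nd a c ≤ nd a b + nd b c := nd_triangle a b c
    simp only [SimpleGraph.Walk.length_cons]
    omega

lemma grid_dist_eq (u v : Fin m → ℤ) : (grid m).dist u v = nd u v := by
  obtain ⟨p, hp⟩ := grid_walk_exists (nd u v) u v rfl
  refine le_antisymm (hp ▸ SimpleGraph.dist_le p) ?_
  obtain ⟨q, hq⟩ := (SimpleGraph.Walk.reachable p).exists_walk_length_eq_dist
  calc nd u v ≤ q.length := nd_le_walk_length q
  _ = _ := hq

end GridLemmas
section TorusLemmas

variable {m : ℕ} (T : TorusData m)

lemma tmk_add (a b : Fin m → ℤ) : tmk T (a + b) = tmk T a + tmk T b := by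
  show QuotientAddGroup.mk _ = _
  rw [QuotientAddGroup.mk_add]
  rfl

lemma tmk_sub (a b : Fin m → ℤ) : tmk T (a - b) = tmk T a - tmk T b := by
  show QuotientAddGroup.mk _ = _
  rw [QuotientAddGroup.mk_sub]
  rfl

lemma torus_adj_add (u : Fin m → ℤ) (i : Fin m) (hne : tmk T u ≠ tmk T (u + e m i)) :
    (torusG T).Adj (tmk T u) (tmk T (u + e m i)) := by
  refine ⟨hne, i, Or.inl ?_⟩
  rw [← tmk_sub]
  congr 1
  abel

lemma torus_adj_sub (u : Fin m → ℤ) (i : Fin m) (hne : tmk T u ≠ tmk T (u - e m i)) :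
    (torusG T).Adj (tmk T u) (tmk T (u - e m i)) := by
  refine ⟨hne, i, Or.inr ?_⟩
  rw [← tmk_sub]
  congr 1
  abel

lemma torus_reachable_of_walk {u v : Fin m → ℤ} (p : (grid m).Walk u v) :
    (torusG T).Reachable (tmk T u) (tmk T v) := by
  induction p with
  | nil => exact SimpleGraph.Reachable.refl _
  | @cons a b c h q ih =>
    refine SimpleGraph.Reachable.trans ?_ ih
    by_cases heq : tmk T a = tmk T b
    · rw [heq]
    · obtain ⟨i, hcase | hcase⟩ := adj_char h
      · subst hcase
        exact (torus_adj_add T a i heq).reachable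
      · subst hcase
        exact (torus_adj_sub T a i heq).reachable

lemma torus_connected : (torusG T).Connected := by
  haveI : Nonempty (TorusV T) := ⟨tmk T 0⟩
  constructor
  intro a b
  induction a using QuotientAddGroup.induction_on with
  | H u =>
  induction b using QuotientAddGroup.induction_on with
  | H v =>
  obtain ⟨p, -⟩ := grid_walk_exists (nd u v) u v rfl
  exact torus_reachable_of_walk T p

lemma lap_eq (w : TorusV T → TorusV T → ℝ) (f : TorusV T → ℤ) (u : Fin m → ℤ)
    (h1 : ∀ i j : Fin m, i ≠ j → tmk T (u + e m i) ≠ tmk T (u + e m j))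
    (h2 : ∀ i j : Fin m, i ≠ j → tmk T (u - e m i) ≠ tmk T (u - e m j))
    (h3 : ∀ i j : Fin m, tmk T (u + e m i) ≠ tmk T (u - e m j))
    (h4 : ∀ i : Fin m, tmk T u ≠ tmk T (u + e m i))
    (h5 : ∀ i : Fin m, tmk T u ≠ tmk T (u - e m i)) :
    lap (torusG T) w f (tmk T u) =
      ∑ i, (w (tmk T u) (tmk T (u + e m i)) * ((f (tmk T (u + e m i)) : ℝ) - (f (tmk T u) : ℝ))
          + w (tmk T u) (tmk T (u - e m i)) * ((f (tmk T (u - e m i)) : ℝ) - (f (tmk T u) : ℝ))) := by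
  classical
  set N : Finset (TorusV T) :=
    (Finset.univ.image fun i => tmk T (u + e m i)) ∪
    (Finset.univ.image fun i => tmk T (u - e m i)) with hN
  have hset : {b | (torusG T).Adj (tmk T u) b} = ↑N := by
    ext b
    simp only [Set.mem_setOf_eq, hN, Finset.coe_union, Set.mem_union, Finset.coe_image,
      Set.mem_image, Finset.coe_univ, Set.image_univ, Set.mem_range]
    constructor
    · rintro ⟨hne, i, hc | hc⟩
      · left
        refine ⟨i, ?_⟩
        have : b = tmk T (e m i) + tmk T u := by
          rw [← hc]; abel
        rw [this, ← tmk_add]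
        congr 1
        abel
      · right
        refine ⟨i, ?_⟩
        have : b = tmk T u - tmk T (e m i) := by
          rw [← hc]; abel
        rw [this, ← tmk_sub]
    · rintro (⟨i, rfl⟩ | ⟨i, rfl⟩)
      · exact torus_adj_add T u i (h4 i)
      · exact torus_adj_sub T u i (h5 i)
  unfold lap
  rw [hset, finsum_mem_coe_finset, hN]
  rw [Finset.sum_union]
  · rw [Finset.sum_image (fun i _ j _ h => by_contra fun hne => h1 i j hne h),
      Finset.sum_image (fun i _ j _ h => by_contra fun hne => h2 i j hne h),
      ← Finset.sum_add_distrib]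
  · rw [Finset.disjoint_left]
    rintro a ha hb
    simp only [Finset.mem_image, Finset.mem_univ, true_and] at ha hb
    obtain ⟨i, rfl⟩ := ha
    obtain ⟨j, hj⟩ := hb
    exact h3 i j hj.symm

end TorusLemmas
section AuxLemmas

variable {m : ℕ}

/-- 1-Lipschitz bump on `ℤ` with `phi s t 0 = 0`, `phi s t 1 = s`, `phi s t (-1) = t`. -/
def phi (s t : ℤ) (x : ℤ) : ℤ := s * max 0 (min 1 x) + t * max 0 (min 1 (-x))

lemma phi_zero (s t : ℤ) : phi s t 0 = 0 := by simp [phi]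

lemma phi_one (s t : ℤ) : phi s t 1 = s := by simp [phi]

lemma phi_neg_one (s t : ℤ) : phi s t (-1) = t := by simp [phi]

lemma phi_lip {s t : ℤ} (hs : s = 1 ∨ s = -1) (ht : t = 1 ∨ t = -1) (p q : ℤ) :
    |phi s t p - phi s t q| ≤ |p - q| := by
  rcases hs with rfl | rfl <;> rcases ht with rfl | rfl <;>
    simp only [phi, Int.abs_eq_natAbs] <;> omega

lemma key_ineq (w1 w2 : ℝ) (hw1 : 0 < w1) (hw2 : 0 < w2) (a b : ℝ)
    (ha : -1 ≤ a) (ha' : a ≤ 1) (hb : -1 ≤ b) (hb' : b ≤ 1) (hba : b ≤ a) :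
    -|w1 - w2| ≤ w1 * a - w2 * b := by
  rcases le_total w1 w2 with h | h
  · rw [abs_of_nonpos (by linarith)]
    nlinarith [mul_nonneg hw1.le (sub_nonneg.mpr hba),
      mul_nonneg (sub_nonneg.mpr h) (sub_nonneg.mpr hb')]
  · rw [abs_of_nonneg (by linarith)]
    nlinarith [mul_nonneg hw2.le (sub_nonneg.mpr hba),
      mul_nonneg (sub_nonneg.mpr h) (by linarith : (0:ℝ) ≤ a + 1)]

lemma nd_shift (u a b : Fin m → ℤ) : nd (u + a) (u + b) = nd a b := by
  unfold nd
  refine Finset.sum_congr rfl fun j _ => ?_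
  simp only [Pi.add_apply]
  omega

lemma nd_neg (a b : Fin m → ℤ) : nd (-a) (-b) = nd a b := by
  unfold nd
  refine Finset.sum_congr rfl fun j _ => ?_
  simp only [Pi.neg_apply]
  omega

lemma nd_zero_e (i : Fin m) : nd 0 (e m i) = 1 := by
  have := nd_add_e (0 : Fin m → ℤ) i
  rwa [zero_add] at this

lemma nd_e_zero (i : Fin m) : nd (e m i) 0 = 1 := by
  rw [nd_comm]; exact nd_zero_e i

lemma nd_ee {i j : Fin m} (h : i ≠ j) : nd (e m i) (e m j) = 2 := by
  unfold nd
  have key : ∀ k, ((e m i) k - (e m j) k).natAbs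
      = (if k = i then 1 else 0) + (if k = j then 1 else 0) := by
    intro k
    simp only [e]
    by_cases hk : k = i
    · subst hk
      rw [if_neg h, if_pos rfl, if_neg h]
      simp
    · rw [if_neg hk, if_neg hk]
      by_cases hk' : k = j <;> simp [hk']
  simp only [key]
  rw [Finset.sum_add_distrib]
  simp

lemma nd_e_nege (i j : Fin m) : nd (e m i) (-e m j) = 2 := by
  unfold nd
  by_cases h : i = j
  · subst h
    have key : ∀ k, ((e m i) k - (-e m i) k).natAbs = if k = i then 2 else 0 := by
      intro k
      simp only [Pi.neg_apply, e]
      by_cases hk : k = i <;> simp [hk]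
    simp only [key]
    simp
  · have key : ∀ k, ((e m i) k - (-e m j) k).natAbs
        = (if k = i then 1 else 0) + (if k = j then 1 else 0) := by
      intro k
      simp only [Pi.neg_apply, e]
      by_cases hk : k = i
      · subst hk
        rw [if_neg h, if_pos rfl, if_neg h]
        simp
      · rw [if_neg hk, if_neg hk]
        by_cases hk' : k = j <;> simp [hk']
    simp only [key]
    rw [Finset.sum_add_distrib]
    simp

lemma nd_nege_e (i j : Fin m) : nd (-e m i) (e m j) = 2 := by
  rw [nd_comm]; exact nd_e_nege j i

lemma nd_negnege {i j : Fin m} (h : i ≠ j) : nd (-e m i) (-e m j) = 2 := by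
  rw [nd_neg]; exact nd_ee h

lemma nd_cast (a b : Fin m → ℤ) : ((nd a b : ℤ)) = ∑ j, |a j - b j| := by
  unfold nd
  push_cast
  refine Finset.sum_congr rfl fun j _ => ?_
  omega

lemma nd_self (a : Fin m → ℤ) : nd a a = 0 := by
  unfold nd; simp

end AuxLemmas
/-- Ollivier curvature formula on a discrete torus.
Here `z` parametrizes the vertex `x = Az` of `Aℤⁿ` and `y = x + αₙ` corresponds to
`z + eₙ`; the (`qℤⁿ`-periodic) weight on `Aℤⁿ` induced from the torus weight `wT` is
`w(u, v) = wT [u] [v]`. -/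
theorem kappa_torus_formula (n : ℕ) (T : TorusData (n + 1))
    (wT : TorusV T → TorusV T → ℝ)
    (hsymm : ∀ a b, wT a b = wT b a)
    (hpos : ∀ a b, (torusG T).Adj a b → 0 < wT a b)
    (z y : Fin (n + 1) → ℤ) (hy : y = z + e (n + 1) (Fin.last n))
    (hdist : ∀ u v : Fin (n + 1) → ℤ,
      ((grid (n + 1)).dist z u ≤ 1 ∨ (grid (n + 1)).dist y u ≤ 1) →
      ((grid (n + 1)).dist z v ≤ 1 ∨ (grid (n + 1)).dist y v ≤ 1) →
      (grid (n + 1)).dist u v = (torusG T).dist (tmk T u) (tmk T v)) :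
    kappa (torusG T) wT (tmk T z) (tmk T y) =
      2 * wT (tmk T z) (tmk T y)
        - wT (tmk T z) (tmk T (z - e (n + 1) (Fin.last n)))
        - wT (tmk T y) (tmk T (y + e (n + 1) (Fin.last n)))
        - ∑ i, (if i ≠ Fin.last n then
            |wT (tmk T z) (tmk T (z + e (n + 1) i)) - wT (tmk T y) (tmk T (y + e (n + 1) i))| +
            |wT (tmk T z) (tmk T (z - e (n + 1) i)) - wT (tmk T y) (tmk T (y - e (n + 1) i))|
          else 0) := by
  classical
  set ln := Fin.last n with hln
  -- basic point identities
  have hyz : y - e (n + 1) ln = z := by rw [hy]; abel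
  have hzy : z + e (n + 1) ln = y := by rw [hy]
  -- condition for membership in B₁(z) ∪ B₁(y)
  set cond : (Fin (n + 1) → ℤ) → Prop := fun p => nd z p ≤ 1 ∨ nd y p ≤ 1 with hcond
  have cz : cond z := Or.inl (by rw [nd_self]; omega)
  have cy : cond y := Or.inr (by rw [nd_self]; omega)
  have czp : ∀ i, cond (z + e (n + 1) i) := fun i => Or.inl (le_of_eq (nd_add_e z i))
  have czm : ∀ i, cond (z - e (n + 1) i) := fun i => Or.inl (le_of_eq (nd_sub_e z i))
  have cyp : ∀ i, cond (y + e (n + 1) i) := fun i => Or.inr (le_of_eq (nd_add_e y i))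
  have cym : ∀ i, cond (y - e (n + 1) i) := fun i => Or.inr (le_of_eq (nd_sub_e y i))
  -- torus distance equals nd on the double ball
  have hT : ∀ p q : Fin (n + 1) → ℤ, cond p → cond q →
      (torusG T).dist (tmk T p) (tmk T q) = nd p q := by
    intro p q hp hq
    have cp : (grid (n + 1)).dist z p ≤ 1 ∨ (grid (n + 1)).dist y p ≤ 1 := by
      rw [grid_dist_eq z p, grid_dist_eq y p]; exact hp
    have cq : (grid (n + 1)).dist z q ≤ 1 ∨ (grid (n + 1)).dist y q ≤ 1 := by
      rw [grid_dist_eq z q, grid_dist_eq y q]; exact hq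
    rw [← hdist p q cp cq, grid_dist_eq]
  have hne : ∀ p q : Fin (n + 1) → ℤ, cond p → cond q → nd p q ≠ 0 → tmk T p ≠ tmk T q := by
    intro p q hp hq h0 heq
    have h1 := hT p q hp hq
    rw [heq, SimpleGraph.dist_self] at h1
    exact h0 h1.symm
  -- lap formula at z and y
  have hlap : ∀ u : Fin (n + 1) → ℤ, cond u → (∀ i, cond (u + e (n + 1) i)) → (∀ i, cond (u - e (n + 1) i)) →
      ∀ f : TorusV T → ℤ, lap (torusG T) wT f (tmk T u) =
      ∑ i, (wT (tmk T u) (tmk T (u + e (n + 1) i)) * ((f (tmk T (u + e (n + 1) i)) : ℝ) - (f (tmk T u) : ℝ))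
          + wT (tmk T u) (tmk T (u - e (n + 1) i)) * ((f (tmk T (u - e (n + 1) i)) : ℝ) - (f (tmk T u) : ℝ))) := by
    intro u hu hup hum f
    apply lap_eq
    · intro i j hij
      exact hne _ _ (hup i) (hup j) (by rw [nd_shift, nd_ee hij]; omega)
    · intro i j hij
      refine hne _ _ (hum i) (hum j) ?_
      rw [sub_eq_add_neg u (e (n + 1) i), sub_eq_add_neg u (e (n + 1) j), nd_shift, nd_negnege hij]
      omega
    · intro i j
      refine hne _ _ (hup i) (hum j) ?_
      rw [sub_eq_add_neg u (e (n + 1) j), nd_shift, nd_e_nege]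
      omega
    · intro i
      exact hne _ _ hu (hup i) (by rw [nd_add_e]; omega)
    · intro i
      exact hne _ _ hu (hum i) (by rw [nd_sub_e]; omega)
  -- adjacency of the relevant pairs, positivity of weights
  have adjzp : ∀ i, (torusG T).Adj (tmk T z) (tmk T (z + e (n + 1) i)) :=
    fun i => torus_adj_add T z i (hne _ _ cz (czp i) (by rw [nd_add_e]; omega))
  have adjzm : ∀ i, (torusG T).Adj (tmk T z) (tmk T (z - e (n + 1) i)) :=
    fun i => torus_adj_sub T z i (hne _ _ cz (czm i) (by rw [nd_sub_e]; omega))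
  have adjyp : ∀ i, (torusG T).Adj (tmk T y) (tmk T (y + e (n + 1) i)) :=
    fun i => torus_adj_add T y i (hne _ _ cy (cyp i) (by rw [nd_add_e]; omega))
  have adjym : ∀ i, (torusG T).Adj (tmk T y) (tmk T (y - e (n + 1) i)) :=
    fun i => torus_adj_sub T y i (hne _ _ cy (cym i) (by rw [nd_sub_e]; omega))
  have pzp : ∀ i, 0 < wT (tmk T z) (tmk T (z + e (n + 1) i)) := fun i => hpos _ _ (adjzp i)
  have pzm : ∀ i, 0 < wT (tmk T z) (tmk T (z - e (n + 1) i)) := fun i => hpos _ _ (adjzm i)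
  have pyp : ∀ i, 0 < wT (tmk T y) (tmk T (y + e (n + 1) i)) := fun i => hpos _ _ (adjyp i)
  have pym : ∀ i, 0 < wT (tmk T y) (tmk T (y - e (n + 1) i)) := fun i => hpos _ _ (adjym i)
  -- the per-direction quantities
  set W : ℝ := wT (tmk T z) (tmk T y) with hW
  set Wm : ℝ := wT (tmk T z) (tmk T (z - e (n + 1) ln)) with hWm
  set Wp : ℝ := wT (tmk T y) (tmk T (y + e (n + 1) ln)) with hWp
  set P : Fin (n + 1) → ℝ := fun i =>
    |wT (tmk T z) (tmk T (z + e (n + 1) i)) - wT (tmk T y) (tmk T (y + e (n + 1) i))| +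
    |wT (tmk T z) (tmk T (z - e (n + 1) i)) - wT (tmk T y) (tmk T (y - e (n + 1) i))| with hP
  set R : Fin (n + 1) → ℝ := fun i => if i = ln then 2 * W - Wm - Wp else -(P i) with hR
  -- rewrite the RHS as a single sum
  have hRHS : (2 * W - Wm - Wp - ∑ i, (if i ≠ ln then P i else 0)) = ∑ i, R i := by
    have hsplit : ∀ i : Fin (n + 1), R i =
        (if i = ln then 2 * W - Wm - Wp else 0) + (if i ≠ ln then -(P i) else 0) := by
      intro i
      by_cases h : i = ln <;> simp [hR, h]
    rw [Finset.sum_congr rfl fun i _ => hsplit i, Finset.sum_add_distrib]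
    have h1 : ∑ i : Fin (n + 1), (if i = ln then 2 * W - Wm - Wp else 0) = 2 * W - Wm - Wp := by
      rw [Finset.sum_ite_eq' Finset.univ ln (fun _ => 2 * W - Wm - Wp)]
      simp
    have h2 : ∑ i : Fin (n + 1), (if i ≠ ln then -(P i) else 0)
        = -∑ i : Fin (n + 1), (if i ≠ ln then P i else 0) := by
      rw [← Finset.sum_neg_distrib]
      refine Finset.sum_congr rfl fun i _ => ?_
      by_cases h : i = ln <;> simp [h]
    rw [h1, h2]
    ring
  -- per-f difference of Laplacians
  have hDiff : ∀ f : TorusV T → ℤ,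
      lap (torusG T) wT f (tmk T z) - lap (torusG T) wT f (tmk T y) =
      ∑ i, ((wT (tmk T z) (tmk T (z + e (n + 1) i)) * ((f (tmk T (z + e (n + 1) i)) : ℝ) - (f (tmk T z) : ℝ))
           + wT (tmk T z) (tmk T (z - e (n + 1) i)) * ((f (tmk T (z - e (n + 1) i)) : ℝ) - (f (tmk T z) : ℝ)))
          - (wT (tmk T y) (tmk T (y + e (n + 1) i)) * ((f (tmk T (y + e (n + 1) i)) : ℝ) - (f (tmk T y) : ℝ))
           + wT (tmk T y) (tmk T (y - e (n + 1) i)) * ((f (tmk T (y - e (n + 1) i)) : ℝ) - (f (tmk T y) : ℝ)))) := by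
    intro f
    rw [hlap z cz czp czm f, hlap y cy cyp cym f, ← Finset.sum_sub_distrib]
  -- lower bound
  have hlb : ∀ f : TorusV T → ℤ, Lip1 (torusG T) f → f (tmk T y) = f (tmk T z) + 1 →
      ∑ i, R i ≤ lap (torusG T) wT f (tmk T z) - lap (torusG T) wT f (tmk T y) := by
    intro f hf hfy
    rw [hDiff f]
    have hfy' : (f (tmk T y) : ℝ) = (f (tmk T z) : ℝ) + 1 := by exact_mod_cast hfy
    have lipR : ∀ p q : Fin (n + 1) → ℤ, cond p → cond q → nd p q = 1 →
        -1 ≤ (f (tmk T p) : ℝ) - (f (tmk T q) : ℝ) ∧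
        (f (tmk T p) : ℝ) - (f (tmk T q) : ℝ) ≤ 1 := by
      intro p q hp hq h1
      have h2 := hf (tmk T p) (tmk T q)
      rw [hT p q hp hq, h1] at h2
      have h3 : |f (tmk T p) - f (tmk T q)| ≤ (1 : ℤ) := by exact_mod_cast h2
      obtain ⟨l, r⟩ := abs_le.mp h3
      constructor
      · have : ((-1 : ℤ) : ℝ) ≤ ((f (tmk T p) - f (tmk T q) : ℤ) : ℝ) := by exact_mod_cast l
        push_cast at this
        linarith
      · have : ((f (tmk T p) - f (tmk T q) : ℤ) : ℝ) ≤ ((1 : ℤ) : ℝ) := by exact_mod_cast r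
        push_cast at this
        linarith
    refine Finset.sum_le_sum fun i _ => ?_
    by_cases hi : i = ln
    · subst hi
      simp only [hR, if_pos rfl]
      rw [hzy, hyz]
      have hc := (lipR (z - e (n + 1) ln) z (czm ln) cz (by rw [nd_comm, nd_sub_e])).1
      have hd := (lipR (y + e (n + 1) ln) y (cyp ln) cy (by rw [nd_comm, nd_add_e])).2
      have hWmpos := pzm ln
      have hWppos := pyp ln
      have hWsym : wT (tmk T y) (tmk T z) = W := by rw [hW, hsymm]
      rw [hWsym, hW, hWm, hWp]
      have hW1 : wT (tmk T z) (tmk T y) * ((f (tmk T y) : ℝ) - (f (tmk T z) : ℝ))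
          = wT (tmk T z) (tmk T y) := by rw [hfy']; ring
      have hW2 : wT (tmk T z) (tmk T y) * ((f (tmk T z) : ℝ) - (f (tmk T y) : ℝ))
          = -wT (tmk T z) (tmk T y) := by rw [hfy']; ring
      linarith [mul_le_mul_of_nonneg_left hc hWmpos.le,
        mul_le_mul_of_nonneg_left hd hWppos.le]
    · simp only [hR, if_neg hi]
      have ndpp : nd (y + e (n + 1) i) (z + e (n + 1) i) = 1 := by
        rw [hy, add_right_comm, nd_comm]
        exact nd_add_e (z + e (n + 1) i) ln
      have ndmm : nd (y - e (n + 1) i) (z - e (n + 1) i) = 1 := by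
        rw [hy, sub_eq_add_neg, sub_eq_add_neg, add_right_comm, nd_comm]
        exact nd_add_e (z + -e (n + 1) i) ln
      have hap := lipR (z + e (n + 1) i) z (czp i) cz (by rw [nd_comm, nd_add_e])
      have ham := lipR (z - e (n + 1) i) z (czm i) cz (by rw [nd_comm, nd_sub_e])
      have hbp := lipR (y + e (n + 1) i) y (cyp i) cy (by rw [nd_comm, nd_add_e])
      have hbm := lipR (y - e (n + 1) i) y (cym i) cy (by rw [nd_comm, nd_sub_e])
      have hdp := (lipR (y + e (n + 1) i) (z + e (n + 1) i) (cyp i) (czp i) ndpp).2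
      have hdm := (lipR (y - e (n + 1) i) (z - e (n + 1) i) (cym i) (czm i) ndmm).2
      have hba_p : (f (tmk T (y + e (n + 1) i)) : ℝ) - f (tmk T y)
          ≤ (f (tmk T (z + e (n + 1) i)) : ℝ) - f (tmk T z) := by linarith
      have hba_m : (f (tmk T (y - e (n + 1) i)) : ℝ) - f (tmk T y)
          ≤ (f (tmk T (z - e (n + 1) i)) : ℝ) - f (tmk T z) := by linarith
      have k1 := key_ineq _ _ (pzp i) (pyp i) _ _ hap.1 hap.2 hbp.1 hbp.2 hba_p
      have k2 := key_ineq _ _ (pzm i) (pym i) _ _ ham.1 ham.2 hbm.1 hbm.2 hba_m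
      simp only [hP]
      linarith
  -- the optimal function F
  have hub : ∃ F : TorusV T → ℤ, Lip1 (torusG T) F ∧ F (tmk T y) = F (tmk T z) + 1 ∧
      lap (torusG T) wT F (tmk T z) - lap (torusG T) wT F (tmk T y) = ∑ i, R i := by
    set s : Fin (n + 1) → ℤ := fun i =>
      if wT (tmk T z) (tmk T (z + e (n + 1) i)) < wT (tmk T y) (tmk T (y + e (n + 1) i))
      then 1 else -1 with hsdef
    set t : Fin (n + 1) → ℤ := fun i =>
      if wT (tmk T z) (tmk T (z - e (n + 1) i)) < wT (tmk T y) (tmk T (y - e (n + 1) i))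
      then 1 else -1 with htdef
    have hs1 : ∀ i, s i = 1 ∨ s i = -1 := by
      intro i; rw [hsdef]; dsimp only; split <;> simp
    have ht1 : ∀ i, t i = 1 ∨ t i = -1 := by
      intro i; rw [htdef]; dsimp only; split <;> simp
    set ψ : Fin (n + 1) → ℤ → ℤ := fun i x => if i = ln then x else phi (s i) (t i) x with hψ
    have ψ0 : ∀ i, ψ i 0 = 0 := by
      intro i; rw [hψ]; dsimp only; split
      · rfl
      · exact phi_zero _ _
    have ψlip : ∀ i p q, |ψ i p - ψ i q| ≤ |p - q| := by
      intro i p q; rw [hψ]; dsimp only; split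
      · exact le_refl _
      · exact phi_lip (hs1 i) (ht1 i) p q
    have ψln : ∀ x : ℤ, ψ ln x = x := fun x => by rw [hψ]; simp
    have ψ1 : ∀ i, i ≠ ln → ψ i 1 = s i := fun i hi => by rw [hψ]; simp [hi, phi_one]
    have ψm1 : ∀ i, i ≠ ln → ψ i (-1) = t i := fun i hi => by rw [hψ]; simp [hi, phi_neg_one]
    set f0 : (Fin (n + 1) → ℤ) → ℤ := fun v => ∑ j, ψ j (v j - z j) with hf0
    have f0lip : ∀ a b, |f0 a - f0 b| ≤ (nd a b : ℤ) := by
      intro a b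
      rw [hf0]; dsimp only
      rw [← Finset.sum_sub_distrib]
      refine le_trans (Finset.abs_sum_le_sum_abs _ _) ?_
      rw [nd_cast]
      refine Finset.sum_le_sum fun j _ => ?_
      refine le_trans (ψlip j _ _) (le_of_eq ?_)
      congr 1; ring
    have eval0 : ∀ c : Fin (n + 1) → ℤ, f0 (z + c) = ∑ j, ψ j (c j) := by
      intro c; rw [hf0]; dsimp only
      refine Finset.sum_congr rfl fun j _ => ?_
      congr 1; simp
    have evE : ∀ (c : Fin (n + 1) → ℤ) (i : Fin (n + 1)), (∀ j, j ≠ i → c j = 0) →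
        (∑ j, ψ j (c j)) = ψ i (c i) := by
      intro c i hc
      exact Finset.sum_eq_single i (fun j _ hj => by rw [hc j hj, ψ0])
        (fun h => absurd (Finset.mem_univ i) h)
    have vzp : ∀ i, f0 (z + e (n + 1) i) = ψ i 1 := by
      intro i
      rw [eval0, evE _ i (fun j hj => by simp [e, hj])]
      congr 1; simp [e]
    have vzm : ∀ i, f0 (z - e (n + 1) i) = ψ i (-1) := by
      intro i
      rw [sub_eq_add_neg, eval0, evE _ i (fun j hj => by simp [e, hj])]
      congr 1; simp [e]
    have vz : f0 z = 0 := by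
      have h := eval0 0
      rw [add_zero] at h
      rw [h]
      exact Finset.sum_eq_zero fun j _ => by rw [Pi.zero_apply, ψ0]
    have vy : f0 y = 1 := by rw [← hzy, vzp, ψln]
    have vyp : ∀ i, i ≠ ln → f0 (y + e (n + 1) i) = 1 + s i := by
      intro i hi
      have hrw : y + e (n + 1) i = z + (e (n + 1) ln + e (n + 1) i) := by
        rw [hy, add_assoc]
      rw [hrw, eval0]
      have hpt : ∀ j, ψ j ((e (n + 1) ln + e (n + 1) i) j)
          = (if j = ln then 1 else 0) + (if j = i then s i else 0) := by
        intro j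
        by_cases hj : j = ln
        · have h1 : (e (n + 1) ln + e (n + 1) i) j = 1 := by
            simp [e, hj, (Ne.symm hi)]
          have h2 : j ≠ i := by rw [hj]; exact Ne.symm hi
          rw [h1, if_pos hj, if_neg h2, hj, ψln]
          norm_num
        · by_cases hji : j = i
          · have h1 : (e (n + 1) ln + e (n + 1) i) j = 1 := by
              simp [e, hj, hji, hi]
            rw [h1, if_neg hj, if_pos hji, hji, ψ1 i hi]
            norm_num
          · have h1 : (e (n + 1) ln + e (n + 1) i) j = 0 := by
              simp [e, hj, hji, hi]
            rw [h1, ψ0, if_neg hj, if_neg hji]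
            norm_num
      rw [Finset.sum_congr rfl fun j _ => hpt j, Finset.sum_add_distrib]
      rw [Finset.sum_ite_eq' Finset.univ ln (fun _ => (1 : ℤ)),
        Finset.sum_ite_eq' Finset.univ i (fun _ => s i)]
      simp
    have vym : ∀ i, i ≠ ln → f0 (y - e (n + 1) i) = 1 + t i := by
      intro i hi
      have hrw : y - e (n + 1) i = z + (e (n + 1) ln - e (n + 1) i) := by
        rw [hy, add_sub_assoc]
      rw [hrw, eval0]
      have hpt : ∀ j, ψ j ((e (n + 1) ln - e (n + 1) i) j)
          = (if j = ln then 1 else 0) + (if j = i then t i else 0) := by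
        intro j
        by_cases hj : j = ln
        · have h1 : (e (n + 1) ln - e (n + 1) i) j = 1 := by
            simp [e, hj, (Ne.symm hi)]
          have h2 : j ≠ i := by rw [hj]; exact Ne.symm hi
          rw [h1, if_pos hj, if_neg h2, hj, ψln]
          norm_num
        · by_cases hji : j = i
          · have h1 : (e (n + 1) ln - e (n + 1) i) j = -1 := by
              simp [e, hj, hji, hi]
            rw [h1, if_neg hj, if_pos hji, hji, ψm1 i hi]
            norm_num
          · have h1 : (e (n + 1) ln - e (n + 1) i) j = 0 := by
              simp [e, hj, hji, hi]
            rw [h1, ψ0, if_neg hj, if_neg hji]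
            norm_num
      rw [Finset.sum_congr rfl fun j _ => hpt j, Finset.sum_add_distrib]
      rw [Finset.sum_ite_eq' Finset.univ ln (fun _ => (1 : ℤ)),
        Finset.sum_ite_eq' Finset.univ i (fun _ => t i)]
      simp
    have vypl : f0 (y + e (n + 1) ln) = 2 := by
      have hrw : y + e (n + 1) ln = z + (e (n + 1) ln + e (n + 1) ln) := by
        rw [hy, add_assoc]
      rw [hrw, eval0, evE _ ln (fun j hj => by simp [e, hj]), ψln]
      simp [e]
    -- the McShane extension
    haveI : Nonempty ((Fin (n + 1) ⊕ Fin (n + 1)) ⊕ (Fin (n + 1) ⊕ Fin (n + 1))) :=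
      ⟨Sum.inl (Sum.inl ln)⟩
    set pt : ((Fin (n + 1) ⊕ Fin (n + 1)) ⊕ (Fin (n + 1) ⊕ Fin (n + 1))) → (Fin (n + 1) → ℤ) :=
      Sum.elim (Sum.elim (fun i => z + e (n + 1) i) (fun i => z - e (n + 1) i))
               (Sum.elim (fun i => y + e (n + 1) i) (fun i => y - e (n + 1) i)) with hptdef
    have cpt : ∀ o, cond (pt o) := by
      rintro ((i | i) | (i | i))
      · exact czp i
      · exact czm i
      · exact cyp i
      · exact cym i
    have hconn := torus_connected T
    set F : TorusV T → ℤ := fun v =>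
      Finset.univ.inf' Finset.univ_nonempty
        (fun o => f0 (pt o) + ((torusG T).dist (tmk T (pt o)) v : ℤ)) with hFdef
    have Fval : ∀ o, F (tmk T (pt o)) = f0 (pt o) := by
      intro o
      rw [hFdef]; dsimp only
      apply le_antisymm
      · refine le_trans (Finset.inf'_le _ (Finset.mem_univ o)) ?_
        rw [SimpleGraph.dist_self]
        simp
      · refine Finset.le_inf' _ _ fun o' _ => ?_
        rw [hT (pt o') (pt o) (cpt o') (cpt o)]
        have h1 := f0lip (pt o) (pt o')
        rw [nd_comm] at h1
        have h2 := (abs_le.mp h1).2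
        linarith
    have Fkey : ∀ a b : TorusV T, F a ≤ F b + ((torusG T).dist a b : ℤ) := by
      intro a b
      obtain ⟨o, -, ho⟩ := Finset.exists_mem_eq_inf' Finset.univ_nonempty
        (fun o => f0 (pt o) + ((torusG T).dist (tmk T (pt o)) b : ℤ))
      have hFb : F b = f0 (pt o) + ((torusG T).dist (tmk T (pt o)) b : ℤ) := by
        rw [hFdef]; exact ho
      have hFa : F a ≤ f0 (pt o) + ((torusG T).dist (tmk T (pt o)) a : ℤ) := by
        rw [hFdef]; exact Finset.inf'_le _ (Finset.mem_univ o)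
      have htri : (torusG T).dist (tmk T (pt o)) a
          ≤ (torusG T).dist (tmk T (pt o)) b + (torusG T).dist b a :=
        hconn.dist_triangle
      have hcomm : (torusG T).dist b a = (torusG T).dist a b := SimpleGraph.dist_comm
      rw [hcomm] at htri
      have htri' : ((torusG T).dist (tmk T (pt o)) a : ℤ)
          ≤ ((torusG T).dist (tmk T (pt o)) b : ℤ) + ((torusG T).dist a b : ℤ) := by
        exact_mod_cast htri
      linarith
    have Flip : Lip1 (torusG T) F := by
      intro a b
      rw [abs_le]
      constructor
      · have h1 := Fkey b a
        have hcomm : (torusG T).dist b a = (torusG T).dist a b := SimpleGraph.dist_comm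
        rw [hcomm] at h1
        linarith
      · have h1 := Fkey a b
        linarith
    -- values of F
    have Fzp : ∀ i, F (tmk T (z + e (n + 1) i)) = ψ i 1 := by
      intro i
      have h := Fval (Sum.inl (Sum.inl i))
      simp only [hptdef, Sum.elim_inl, Sum.elim_inr] at h
      rw [h, vzp]
    have Fzm : ∀ i, F (tmk T (z - e (n + 1) i)) = ψ i (-1) := by
      intro i
      have h := Fval (Sum.inl (Sum.inr i))
      simp only [hptdef, Sum.elim_inl, Sum.elim_inr] at h
      rw [h, vzm]
    have Fyp : ∀ i, F (tmk T (y + e (n + 1) i)) = f0 (y + e (n + 1) i) := by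
      intro i
      have h := Fval (Sum.inr (Sum.inl i))
      simp only [hptdef, Sum.elim_inl, Sum.elim_inr] at h
      exact h
    have Fym : ∀ i, F (tmk T (y - e (n + 1) i)) = f0 (y - e (n + 1) i) := by
      intro i
      have h := Fval (Sum.inr (Sum.inr i))
      simp only [hptdef, Sum.elim_inl, Sum.elim_inr] at h
      exact h
    have Fz : F (tmk T z) = 0 := by
      have h := Fym ln
      rw [hyz] at h
      rw [h, vz]
    have Fy : F (tmk T y) = 1 := by
      have h := Fzp ln
      rw [hzy] at h
      rw [h, ψln]
    refine ⟨F, Flip, by rw [Fy, Fz]; norm_num, ?_⟩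
    rw [hDiff F]
    refine Finset.sum_congr rfl fun i _ => ?_
    by_cases hi : i = ln
    · subst hi
      simp only [hR, if_pos rfl]
      rw [hzy, hyz]
      have h1 := Fzm ln
      rw [ψln] at h1
      have h2 := Fyp ln
      rw [vypl] at h2
      rw [Fy, Fz, h1, h2, hsymm (tmk T y) (tmk T z), hW, hWm, hWp]
      push_cast
      ring
    · simp only [hR, if_neg hi, hP]
      rw [Fzp i, Fzm i, Fyp i, Fym i, vyp i hi, vym i hi, Fy, Fz, ψ1 i hi, ψm1 i hi]
      have e1 : wT (tmk T z) (tmk T (z + e (n + 1) i)) * ((s i : ℤ) : ℝ)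
          - wT (tmk T y) (tmk T (y + e (n + 1) i)) * ((s i : ℤ) : ℝ)
          = -|wT (tmk T z) (tmk T (z + e (n + 1) i))
              - wT (tmk T y) (tmk T (y + e (n + 1) i))| := by
        rw [hsdef]; dsimp only; split
        · rename_i h; push_cast; rw [abs_of_neg (by linarith)]; ring
        · rename_i h; push_cast; rw [abs_of_nonneg (by linarith [le_of_not_gt h])]; ring
      have e2 : wT (tmk T z) (tmk T (z - e (n + 1) i)) * ((t i : ℤ) : ℝ)
          - wT (tmk T y) (tmk T (y - e (n + 1) i)) * ((t i : ℤ) : ℝ)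
          = -|wT (tmk T z) (tmk T (z - e (n + 1) i))
              - wT (tmk T y) (tmk T (y - e (n + 1) i))| := by
        rw [htdef]; dsimp only; split
        · rename_i h; push_cast; rw [abs_of_neg (by linarith)]; ring
        · rename_i h; push_cast; rw [abs_of_nonneg (by linarith [le_of_not_gt h])]; ring
      push_cast
      push_cast at e1 e2
      linarith [e1, e2]
  -- conclude
  obtain ⟨F, hF1, hF2, hF3⟩ := hub
  rw [hRHS]
  unfold kappa
  have hmem : (∑ i, R i) ∈ {r | ∃ f : TorusV T → ℤ, Lip1 (torusG T) f ∧
      f (tmk T y) = f (tmk T z) + 1 ∧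
      r = lap (torusG T) wT f (tmk T z) - lap (torusG T) wT f (tmk T y)} :=
    ⟨F, hF1, hF2, hF3.symm⟩
  have hlb' : ∀ r ∈ {r | ∃ f : TorusV T → ℤ, Lip1 (torusG T) f ∧
      f (tmk T y) = f (tmk T z) + 1 ∧
      r = lap (torusG T) wT f (tmk T z) - lap (torusG T) wT f (tmk T y)}, (∑ i, R i) ≤ r := by
    rintro r ⟨f, hf1, hf2, rfl⟩
    exact hlb f hf1 hf2
  exact le_antisymm (csInf_le ⟨∑ i, R i, hlb'⟩ hmem) (le_csInf ⟨∑ i, R i, hmem⟩ hlb')
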